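/- Let $w:[0,1]^2\to[0,\infty)$ be symmetric measurable, and suppose $\mathbb{E}\,e^{s\,w^k(\xi_1,\xi_2)}<\infty$ for all $k\ge 1$ and all $|s|\le\varepsilon$ for some $\varepsilon>0$, where $\xi_1,\xi_2$ are i.i.d. uniform on $(0,1)$. Let $T_w f(u)=\int_0^1 w(u,v)f(v)\,dv$. Then for each $l\ge 1$ there exists $\varepsilon_l>0$ such that $\mathbb{E}\exp\{s\,(T_w^l 1)(\xi)\}<\infty$ for all $|s|\le\varepsilon_l$, with $\xi$ uniform on $(0,1)$. -/

import Mathlib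

open MeasureTheory

noncomputable def unif : Measure ℝ := volume.restrict (Set.Icc 0 1)

/-- The integral operator `T_w` with kernel `w`. -/
noncomputable def Tw (w : ℝ → ℝ → ℝ) (f : ℝ → ℝ) : ℝ → ℝ :=
  fun u => ∫ v, w u v * f v ∂unif

instance : IsProbabilityMeasure unif :=
  ⟨by simp [unif, Measure.restrict_apply_univ, Real.volume_Icc]⟩


lemma jensen_exp {α : Type*} [MeasurableSpace α] {μ : Measure α} [IsProbabilityMeasure μ]
    {g : α → ℝ} (hg : AEMeasurable g μ) (hg0 : 0 ≤ᵐ[μ] g) :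
    ENNReal.ofReal (Real.exp (∫ x, g x ∂μ)) ≤ ∫⁻ x, ENNReal.ofReal (Real.exp (g x)) ∂μ := by
  by_cases hfin : ∫⁻ x, ENNReal.ofReal (Real.exp (g x)) ∂μ = ⊤
  · simp [hfin]
  have hexp_meas : AEStronglyMeasurable (fun x => Real.exp (g x)) μ :=
    (Real.measurable_exp.comp_aemeasurable hg).aestronglyMeasurable
  have hexp_int : Integrable (fun x => Real.exp (g x)) μ := by
    refine ⟨hexp_meas, ?_⟩
    rw [hasFiniteIntegral_iff_ofReal (Filter.Eventually.of_forall fun x => (Real.exp_pos _).le)]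
    exact lt_top_iff_ne_top.mpr hfin
  have hg_int : Integrable g μ := by
    refine hexp_int.mono' hg.aestronglyMeasurable ?_
    filter_upwards [hg0] with x hx
    rw [Real.norm_eq_abs, abs_of_nonneg hx]
    linarith [Real.add_one_le_exp (g x)]
  have hjen := convexOn_exp.map_average_le Real.continuous_exp.continuousOn isClosed_univ
    (Filter.Eventually.of_forall fun x => Set.mem_univ (g x)) hg_int hexp_int
  rw [average_eq_integral, average_eq_integral] at hjen
  have heq : ∫ x, Real.exp (g x) ∂μ =
      (∫⁻ x, ENNReal.ofReal (Real.exp (g x)) ∂μ).toReal :=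
    integral_eq_lintegral_of_nonneg_ae (Filter.Eventually.of_forall fun x => (Real.exp_pos _).le)
      hexp_meas
  calc ENNReal.ofReal (Real.exp (∫ x, g x ∂μ))
      ≤ ENNReal.ofReal (∫ x, Real.exp (g x) ∂μ) := ENNReal.ofReal_le_ofReal hjen
    _ = ∫⁻ x, ENNReal.ofReal (Real.exp (g x)) ∂μ := by
        rw [heq, ENNReal.ofReal_toReal hfin]

lemma jensen_pow {α : Type*} [MeasurableSpace α] {μ : Measure α} [IsProbabilityMeasure μ]
    (m : ℕ) {g : α → ℝ} (hg0 : 0 ≤ᵐ[μ] g)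
    (hgi : Integrable g μ) (hgmi : Integrable (fun x => g x ^ m) μ) :
    (∫ x, g x ∂μ) ^ m ≤ ∫ x, g x ^ m ∂μ := by
  have := (convexOn_pow (𝕜 := ℝ) m).map_average_le (continuous_pow m).continuousOn
    isClosed_Ici (by filter_upwards [hg0] with x hx; exact hx) hgi hgmi
  rwa [average_eq_integral, average_eq_integral] at this

lemma keyIneq {α : Type*} [MeasurableSpace α] {μ : Measure α} [IsProbabilityMeasure μ]
    {φ ψ : α → ℝ} (hφ : AEMeasurable φ μ) (hψ : AEMeasurable ψ μ)
    (hφ0 : ∀ x, 0 ≤ φ x) (hψ0 : ∀ x, 0 ≤ ψ x) {s : ℝ} (hs : 0 < s) {m : ℕ} (hm : 1 ≤ m) :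
    ENNReal.ofReal (Real.exp (s * (∫ x, φ x * ψ x ∂μ) ^ m)) ≤
      ∫⁻ x, ENNReal.ofReal (Real.exp (s / 2 * φ x ^ (2 * m))) *
        ENNReal.ofReal (Real.exp (s / 2 * ψ x ^ (2 * m))) ∂μ := by
  set g : α → ℝ := fun x => s / 2 * φ x ^ (2 * m) + s / 2 * ψ x ^ (2 * m) with hgdef
  have hg0 : ∀ x, 0 ≤ g x := fun x => by
    have := pow_nonneg (hφ0 x) (2 * m); have := pow_nonneg (hψ0 x) (2 * m); positivity
  have hrw : (fun x => ENNReal.ofReal (Real.exp (s / 2 * φ x ^ (2 * m))) *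
      ENNReal.ofReal (Real.exp (s / 2 * ψ x ^ (2 * m)))) =
      fun x => ENNReal.ofReal (Real.exp (g x)) := by
    funext x
    rw [hgdef, Real.exp_add, ENNReal.ofReal_mul (Real.exp_nonneg _)]
  rw [hrw]
  by_cases hfin : ∫⁻ x, ENNReal.ofReal (Real.exp (g x)) ∂μ = ⊤
  · simp [hfin]
  have hgmeas : AEMeasurable g μ := by
    exact ((aemeasurable_const.mul (hφ.pow aemeasurable_const)).add
      (aemeasurable_const.mul (hψ.pow aemeasurable_const)))
  have hexp_meas : AEStronglyMeasurable (fun x => Real.exp (g x)) μ :=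
    (Real.measurable_exp.comp_aemeasurable hgmeas).aestronglyMeasurable
  have hexp_int : Integrable (fun x => Real.exp (g x)) μ := by
    refine ⟨hexp_meas, ?_⟩
    rw [hasFiniteIntegral_iff_ofReal (Filter.Eventually.of_forall fun x => (Real.exp_pos _).le)]
    exact lt_top_iff_ne_top.mpr hfin
  have hg_int : Integrable g μ := by
    refine hexp_int.mono' hgmeas.aestronglyMeasurable ?_
    refine Filter.Eventually.of_forall fun x => ?_
    rw [Real.norm_eq_abs, abs_of_nonneg (hg0 x)]
    linarith [Real.add_one_le_exp (g x)]
  -- pointwise: s * (φψ)^m ≤ g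
  have hkey : ∀ x, s * (φ x * ψ x) ^ m ≤ g x := by
    intro x
    have h1 : (φ x * ψ x) ^ m = φ x ^ m * ψ x ^ m := mul_pow _ _ _
    have h2 : 2 * (φ x ^ m * ψ x ^ m) ≤ φ x ^ (2 * m) + ψ x ^ (2 * m) := by
      have := two_mul_le_add_sq (φ x ^ m) (ψ x ^ m)
      have e1 : (φ x ^ m) ^ 2 = φ x ^ (2 * m) := by rw [← pow_mul, mul_comm]
      have e2 : (ψ x ^ m) ^ 2 = ψ x ^ (2 * m) := by rw [← pow_mul, mul_comm]
      nlinarith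
    rw [h1, hgdef]
    nlinarith
  have hh_meas : AEMeasurable (fun x => (φ x * ψ x) ^ m) μ :=
    (hφ.mul hψ).pow aemeasurable_const
  have hh_nn : ∀ x, 0 ≤ (φ x * ψ x) ^ m := fun x =>
    pow_nonneg (mul_nonneg (hφ0 x) (hψ0 x)) m
  have hh_int : Integrable (fun x => (φ x * ψ x) ^ m) μ := by
    refine (hg_int.const_mul s⁻¹).mono' hh_meas.aestronglyMeasurable ?_
    refine Filter.Eventually.of_forall fun x => ?_
    rw [Real.norm_eq_abs, abs_of_nonneg (hh_nn x)]
    have h1 := mul_le_mul_of_nonneg_left (hkey x) (inv_pos.mpr hs).le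
    rwa [← mul_assoc, inv_mul_cancel₀ hs.ne', one_mul] at h1
  have hfψ_int : Integrable (fun x => φ x * ψ x) μ := by
    refine (hh_int.add (integrable_const 1)).mono' (hφ.mul hψ).aestronglyMeasurable ?_
    refine Filter.Eventually.of_forall fun x => ?_
    simp only [Pi.add_apply]
    have ht : 0 ≤ φ x * ψ x := mul_nonneg (hφ0 x) (hψ0 x)
    rw [Real.norm_eq_abs, abs_of_nonneg ht]
    rcases le_total (φ x * ψ x) 1 with h | h
    · have := hh_nn x; linarith
    · have := le_self_pow₀ h (by omega : m ≠ 0); linarith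
  have hjp : (∫ x, φ x * ψ x ∂μ) ^ m ≤ ∫ x, (φ x * ψ x) ^ m ∂μ :=
    jensen_pow m (Filter.Eventually.of_forall fun x => mul_nonneg (hφ0 x) (hψ0 x)) hfψ_int hh_int
  have hint2 : s * ∫ x, (φ x * ψ x) ^ m ∂μ ≤ ∫ x, g x ∂μ := by
    rw [← integral_const_mul]
    exact integral_mono (hh_int.const_mul s) hg_int fun x => hkey x
  have hfinal : s * (∫ x, φ x * ψ x ∂μ) ^ m ≤ ∫ x, g x ∂μ :=
    le_trans (by nlinarith) hint2
  calc ENNReal.ofReal (Real.exp (s * (∫ x, φ x * ψ x ∂μ) ^ m))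
      ≤ ENNReal.ofReal (Real.exp (∫ x, g x ∂μ)) :=
        ENNReal.ofReal_le_ofReal (Real.exp_le_exp.mpr hfinal)
    _ ≤ ∫⁻ x, ENNReal.ofReal (Real.exp (g x)) ∂μ :=
        jensen_exp hgmeas (Filter.Eventually.of_forall hg0)

lemma F_meas (w : ℝ → ℝ → ℝ) (hmeas : Measurable fun p : ℝ × ℝ => w p.1 p.2) :
    ∀ l : ℕ, Measurable ((Tw w)^[l] (fun _ => 1)) := by
  intro l
  induction l with
  | zero => exact measurable_const
  | succ l ih =>
    rw [Function.iterate_succ_apply']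
    exact (hmeas.mul (ih.comp measurable_snd)).stronglyMeasurable.integral_prod_right'.measurable

lemma F_nonneg (w : ℝ → ℝ → ℝ) (hnn : ∀ u v, 0 ≤ w u v) :
    ∀ l : ℕ, ∀ u, 0 ≤ (Tw w)^[l] (fun _ => 1) u := by
  intro l
  induction l with
  | zero => intro u; norm_num
  | succ l ih =>
    rw [Function.iterate_succ_apply']
    intro u
    exact integral_nonneg fun v => mul_nonneg (hnn u v) (ih v)

-- helper: squaring the ofReal exp
lemma sq_ofReal_exp (t : ℝ) :
    ENNReal.ofReal (Real.exp t) ^ (2 : ℝ) = ENNReal.ofReal (Real.exp (2 * t)) := by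
  rw [ENNReal.ofReal_rpow_of_nonneg (Real.exp_nonneg t) (by norm_num : (0:ℝ) ≤ 2),
    ← Real.exp_mul, mul_comm]

lemma main_lemma (w : ℝ → ℝ → ℝ)
    (hmeas : Measurable fun p : ℝ × ℝ => w p.1 p.2)
    (hnn : ∀ u v, 0 ≤ w u v)
    (ε : ℝ) (hε : 0 < ε)
    (hA' : ∀ k : ℕ, 1 ≤ k → ∀ s : ℝ, |s| ≤ ε →
      Integrable (fun p : ℝ × ℝ => Real.exp (s * (w p.1 p.2) ^ k)) (unif.prod unif)) :
    ∀ l : ℕ, ∀ m : ℕ, 1 ≤ m → ∃ s : ℝ, 0 < s ∧ s ≤ ε ∧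
      ∫⁻ u, ENNReal.ofReal (Real.exp (s * ((Tw w)^[l] (fun _ => 1) u) ^ m)) ∂unif < ⊤ := by
  intro l
  induction l with
  | zero =>
    intro m hm
    refine ⟨ε, hε, le_refl _, ?_⟩
    simp only [Function.iterate_zero_apply, one_pow, mul_one]
    rw [lintegral_const]
    simp [ENNReal.ofReal_lt_top]
  | succ l ih =>
    intro m hm
    obtain ⟨s, hs, hsε, hfin⟩ := ih (2 * m) (by omega)
    refine ⟨s, hs, hsε, ?_⟩
    set F := (Tw w)^[l] (fun _ => 1) with hF
    have hFmeas : Measurable F := F_meas w hmeas l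
    have hF0 : ∀ u, 0 ≤ F u := F_nonneg w hnn l
    have hiter : (Tw w)^[l + 1] (fun _ => 1) = Tw w F := by
      rw [Function.iterate_succ_apply']
    -- abbreviations
    set A : ℝ × ℝ → ENNReal := fun p => ENNReal.ofReal (Real.exp (s / 2 * w p.1 p.2 ^ (2 * m)))
      with hA
    set B : ℝ → ENNReal := fun v => ENNReal.ofReal (Real.exp (s / 2 * F v ^ (2 * m))) with hB
    have hAmeas : AEMeasurable A (unif.prod unif) :=
      (((measurable_const.mul (hmeas.pow measurable_const)).exp).ennreal_ofReal).aemeasurable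
    have hBmeas : Measurable B :=
      ((measurable_const.mul (hFmeas.pow measurable_const)).exp).ennreal_ofReal
    have hprodmeas : AEMeasurable (fun p : ℝ × ℝ => A p * B p.2) (unif.prod unif) :=
      hAmeas.mul (hBmeas.comp measurable_snd).aemeasurable
    have step1 : ∫⁻ u, ENNReal.ofReal (Real.exp (s * (Tw w F u) ^ m)) ∂unif ≤
        ∫⁻ u, ∫⁻ v, A (u, v) * B v ∂unif ∂unif := by
      refine lintegral_mono fun u => ?_
      have hφ : AEMeasurable (fun v => w u v) unif :=
        (hmeas.comp (measurable_prodMk_left : Measurable fun v => (u, v))).aemeasurable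
      exact keyIneq hφ hFmeas.aemeasurable (fun v => hnn u v) hF0 hs hm
    have step2 : ∫⁻ u, ∫⁻ v, A (u, v) * B v ∂unif ∂unif =
        ∫⁻ p : ℝ × ℝ, A p * B p.2 ∂(unif.prod unif) := by
      rw [lintegral_prod _ hprodmeas]
    have hconj : Real.HolderConjugate 2 2 := Real.HolderConjugate.two_two
    have step3 : ∫⁻ p : ℝ × ℝ, A p * B p.2 ∂(unif.prod unif) ≤
        (∫⁻ p : ℝ × ℝ, A p ^ (2:ℝ) ∂(unif.prod unif)) ^ (1/2 : ℝ) *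
        (∫⁻ p : ℝ × ℝ, B p.2 ^ (2:ℝ) ∂(unif.prod unif)) ^ (1/2 : ℝ) :=
      ENNReal.lintegral_mul_le_Lp_mul_Lq (unif.prod unif) hconj hAmeas
        (hBmeas.comp measurable_snd).aemeasurable
    -- factor 1 finite
    have hfac1 : ∫⁻ p : ℝ × ℝ, A p ^ (2:ℝ) ∂(unif.prod unif) < ⊤ := by
      have hint := hA' (2 * m) (by omega) s (by rw [abs_of_pos hs]; exact hsε)
      have := hint.2
      rw [hasFiniteIntegral_iff_ofReal
        (Filter.Eventually.of_forall fun p => (Real.exp_pos _).le)] at this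
      calc ∫⁻ p : ℝ × ℝ, A p ^ (2:ℝ) ∂(unif.prod unif)
          = ∫⁻ p : ℝ × ℝ, ENNReal.ofReal (Real.exp (s * w p.1 p.2 ^ (2 * m)))
            ∂(unif.prod unif) := by
            refine lintegral_congr fun p => ?_
            rw [hA, sq_ofReal_exp]
            ring_nf
        _ < ⊤ := this
    -- factor 2 finite
    have hfac2 : ∫⁻ p : ℝ × ℝ, B p.2 ^ (2:ℝ) ∂(unif.prod unif) < ⊤ := by
      have heq : ∀ v, B v ^ (2:ℝ) = ENNReal.ofReal (Real.exp (s * F v ^ (2 * m))) := by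
        intro v; rw [hB, sq_ofReal_exp]; ring_nf
      calc ∫⁻ p : ℝ × ℝ, B p.2 ^ (2:ℝ) ∂(unif.prod unif)
          = ∫⁻ u, ∫⁻ v, B v ^ (2:ℝ) ∂unif ∂unif := by
            refine lintegral_prod _ ?_
            exact ((hBmeas.pow_const _).comp measurable_snd).aemeasurable
        _ = ∫⁻ v, B v ^ (2:ℝ) ∂unif := by rw [lintegral_const, measure_univ, mul_one]
        _ = ∫⁻ v, ENNReal.ofReal (Real.exp (s * F v ^ (2*m))) ∂unif := lintegral_congr heq
        _ < ⊤ := hfin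
    rw [hiter]
    refine lt_of_le_of_lt (le_trans step1 (step2 ▸ step3)) ?_
    exact ENNReal.mul_lt_top (ENNReal.rpow_lt_top_of_nonneg (by norm_num) hfac1.ne)
      (ENNReal.rpow_lt_top_of_nonneg (by norm_num) hfac2.ne)

/-- condition (A') implies finiteness of exponential moments of the
iterates `T_w^l 1`: if `E exp(s wᵏ(ξ₁,ξ₂)) < ∞` for all `k ≥ 1` and `|s| ≤ ε`,
then for each `l ≥ 1` there is `ε_l > 0` with `E exp(s (T_w^l 1)(ξ)) < ∞` for
`|s| ≤ ε_l`. -/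
theorem stmt12 (w : ℝ → ℝ → ℝ)
    (hmeas : Measurable fun p : ℝ × ℝ => w p.1 p.2)
    (hsym : ∀ u v, w u v = w v u)
    (hnn : ∀ u v, 0 ≤ w u v)
    (ε : ℝ) (hε : 0 < ε)
    (hA' : ∀ k : ℕ, 1 ≤ k → ∀ s : ℝ, |s| ≤ ε →
      Integrable (fun p : ℝ × ℝ => Real.exp (s * (w p.1 p.2) ^ k)) (unif.prod unif)) :
    ∀ l : ℕ, 1 ≤ l → ∃ εl > (0 : ℝ), ∀ s : ℝ, |s| ≤ εl →
      Integrable (fun u => Real.exp (s * (Tw w)^[l] (fun _ => 1) u)) unif := by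
  intro l hl
  obtain ⟨s₀, hs₀, hs₀ε, hfin⟩ := main_lemma w hmeas hnn ε hε hA' l 1 le_rfl
  simp only [pow_one] at hfin
  set F := (Tw w)^[l] (fun _ => 1) with hF
  have hFmeas : Measurable F := F_meas w hmeas l
  have hF0 : ∀ u, 0 ≤ F u := F_nonneg w hnn l
  have hg_int : Integrable (fun u => Real.exp (s₀ * F u)) unif := by
    refine ⟨((measurable_const.mul hFmeas).exp).aestronglyMeasurable, ?_⟩
    rw [hasFiniteIntegral_iff_ofReal (Filter.Eventually.of_forall fun u => (Real.exp_pos _).le)]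
    exact hfin
  refine ⟨s₀, hs₀, fun s hs => ?_⟩
  refine hg_int.mono' ((measurable_const.mul hFmeas).exp).aestronglyMeasurable ?_
  refine Filter.Eventually.of_forall fun u => ?_
  rw [Real.norm_eq_abs, abs_of_pos (Real.exp_pos _), Real.exp_le_exp]
  have : s ≤ s₀ := le_trans (le_abs_self s) hs
  exact mul_le_mul_of_nonneg_right this (hF0 u)
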